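/- Let τ be the transposition of {0,1,2} swapping 1 and 2 and fixing 0. For every m ≥ 1, every word w ∈ {0,1,2}^m beginning with the letter 0, and every j ∈ {0,1,2}, the integers defined by the recursion (1)–(3) satisfy b(τ∘w, τ(j)) = b(w, j), where τ∘w is the word obtained by applying τ to each letter of w. (This is the 'local symmetry' used in the proof of Theorem 2.4, which also shows the alphabet-symmetric extension of b to all words is well defined.) -/

import Mathlib

/-- `φ`: reread the binary expansion of `n` in base 3, so that
`φ(0) = 0`, `φ(2n) = 3 φ(n)`, `φ(2n+1) = 3 φ(n) + 1`. -/
def phi (n : ℕ) : ℕ := Nat.ofDigits 3 (Nat.digits 2 n)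

/-- `bₙ = 3 φ(n)`. -/
def bseq (n : ℕ) : ℕ := 3 * phi n

/-- The value of a word read as a binary numeral (big-endian). -/
def binVal (w : List (Fin 3)) : ℕ := w.foldl (fun acc d => 2 * acc + d.val) 0

/-- The values assigned in case (1) of the algorithm to the word `0 :: wt`,
all of whose letters lie in `{0, 1}`:  with `n = 2^(m-1) - N(w)`, we set
`b(w,0) = bₙ`, `b(w,1) = -b_{n-1}`, `b(w,2) = 3 - bₙ + b_{n-1}`. -/
def caseOneVal (wt : List (Fin 3)) (j : Fin 3) : ℤ :=
  let n := 2 ^ wt.length - binVal wt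
  if j = 0 then (bseq n : ℤ)
  else if j = 1 then -(bseq (n - 1) : ℤ)
  else 3 - (bseq n : ℤ) + (bseq (n - 1) : ℤ)

/-- `bTail wt j = b(0 :: wt, j)`, the `b`-values on words beginning with the letter `0`,
defined by the recursion (1)–(3) of the paper's algorithms. -/
def bTail : List (Fin 3) → Fin 3 → ℤ
  | [], j => caseOneVal [] j
  | x :: w', j =>
    if ∀ d ∈ x :: w', d = 0 ∨ d = 1 then
      -- case (1), letters in {0,1}
      caseOneVal (x :: w') j
    else if ∀ d ∈ x :: w', d = 0 ∨ d = 2 then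
      -- case (1), letters in {0,2} (with some letter equal to 2): by the 1 ↔ 2 symmetry
      caseOneVal ((x :: w').map (Equiv.swap 1 2)) (Equiv.swap 1 2 j)
    else
      -- cases (2) and (3): drop the second letter of the word
      bTail w' j

/-- `b(w, j)` for an arbitrary word `w`, via the alphabet-symmetric extension
`b(σ ∘ w, σ j) = b(w, j)`. -/
def bVal : List (Fin 3) → Fin 3 → ℤ
  | [], _ => 0
  | i :: wt, j =>
    if i = 0 then bTail wt j
    else if i = 1 then bTail (wt.map (Equiv.swap 0 1)) (Equiv.swap 0 1 j)
    else bTail (wt.map (Equiv.swap 0 2)) (Equiv.swap 0 2 j)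

lemma phi_two_mul (n : ℕ) (h : 0 < n) : phi (2 * n) = 3 * phi n := by
  unfold phi
  rw [Nat.digits_def' (by norm_num : 1 < 2) (by omega), Nat.mul_mod_right,
    Nat.mul_div_cancel_left _ (by norm_num), Nat.ofDigits_cons]
  ring

lemma phi_two_mul_add_one (n : ℕ) : phi (2 * n + 1) = 3 * phi n + 1 := by
  unfold phi
  rw [Nat.digits_def' (by norm_num : 1 < 2) (by omega)]
  have h1 : (2 * n + 1) % 2 = 1 := by omega
  have h2 : (2 * n + 1) / 2 = n := by omega
  rw [h1, h2, Nat.ofDigits_cons]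
  ring

lemma phi_pow (k : ℕ) : phi (2 ^ k) = 2 * phi (2 ^ k - 1) + 1 := by
  induction k with
  | zero => simp [phi]
  | succ k ih =>
    have hp : 0 < 2 ^ k := Nat.pow_pos (by norm_num)
    have h1 : 2 ^ (k + 1) = 2 * 2 ^ k := by ring
    rw [h1, show 2 * 2 ^ k - 1 = 2 * (2 ^ k - 1) + 1 by omega,
      phi_two_mul _ hp, phi_two_mul_add_one, ih]
    ring

lemma bseq_pow (k : ℕ) : (bseq (2 ^ k) : ℤ) = 2 * bseq (2 ^ k - 1) + 3 := by
  unfold bseq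
  rw [phi_pow k]
  push_cast
  ring

lemma binVal_zero (l : List (Fin 3)) (h : ∀ d ∈ l, d = 0) : binVal l = 0 := by
  induction l with
  | nil => rfl
  | cons x xs ih =>
    have hx : x = 0 := h x (by simp)
    have : binVal (x :: xs) = binVal xs := by
      unfold binVal
      simp [hx]
    rw [this]
    exact ih fun d hd => h d (by simp [hd])

lemma swap_val0 : Equiv.swap (1 : Fin 3) 2 0 = 0 := by decide

lemma swap_val1 : Equiv.swap (1 : Fin 3) 2 1 = 2 := by decide

lemma swap_val2 : Equiv.swap (1 : Fin 3) 2 2 = 1 := by decide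

lemma caseOneVal_zero_swap (l : List (Fin 3)) (h : ∀ d ∈ l, d = 0) (j : Fin 3) :
    caseOneVal l (Equiv.swap 1 2 j) = caseOneVal l j := by
  have hb : binVal l = 0 := binVal_zero l h
  have hkey := bseq_pow l.length
  unfold caseOneVal
  rw [hb, Nat.sub_zero]
  have hj : j = 0 ∨ j = 1 ∨ j = 2 := by revert j; decide
  rcases hj with h | h | h <;> subst h <;>
    simp only [swap_val0, swap_val1, swap_val2] <;> norm_num <;> omega

lemma mem_map_swap_01 (l : List (Fin 3)) :
    (∀ d ∈ l.map (Equiv.swap 1 2), d = 0 ∨ d = 1) ↔ (∀ d ∈ l, d = 0 ∨ d = 2) := by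
  have t : ∀ d : Fin 3, (Equiv.swap 1 2 d = 0 ∨ Equiv.swap 1 2 d = 1) ↔ (d = 0 ∨ d = 2) := by
    decide
  simp only [List.mem_map, forall_exists_index, and_imp]
  constructor
  · intro h d hd
    exact (t d).mp (h _ d hd rfl)
  · intro h x d hd hx
    subst hx
    exact (t d).mpr (h d hd)

lemma mem_map_swap_02 (l : List (Fin 3)) :
    (∀ d ∈ l.map (Equiv.swap 1 2), d = 0 ∨ d = 2) ↔ (∀ d ∈ l, d = 0 ∨ d = 1) := by
  have t : ∀ d : Fin 3, (Equiv.swap 1 2 d = 0 ∨ Equiv.swap 1 2 d = 2) ↔ (d = 0 ∨ d = 1) := by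
    decide
  simp only [List.mem_map, forall_exists_index, and_imp]
  constructor
  · intro h d hd
    exact (t d).mp (h _ d hd rfl)
  · intro h x d hd hx
    subst hx
    exact (t d).mpr (h d hd)

lemma map_swap_swap (l : List (Fin 3)) :
    (l.map (Equiv.swap 1 2)).map (Equiv.swap 1 2) = l := by
  rw [List.map_map]
  simp [Function.comp_def, Equiv.swap_apply_self]

lemma bTail_swap (wt : List (Fin 3)) (j : Fin 3) :
    bTail (wt.map (Equiv.swap 1 2)) (Equiv.swap 1 2 j) = bTail wt j := by
  induction wt generalizing j with
  | nil =>
    show caseOneVal [] (Equiv.swap 1 2 j) = caseOneVal [] j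
    exact caseOneVal_zero_swap [] (by simp) j
  | cons x w' ih =>
    by_cases hP : ∀ d ∈ x :: w', d = 0 ∨ d = 1
    · by_cases hQ : ∀ d ∈ x :: w', d = 0 ∨ d = 2
      · -- all zeros
        have hz : ∀ d ∈ x :: w', d = (0 : Fin 3) := by
          intro d hd
          rcases hP d hd with h1 | h1 <;> rcases hQ d hd with h2 | h2 <;>
            simp_all
        have hmap : (x :: w').map (Equiv.swap 1 2) = x :: w' := by
          conv_rhs => rw [← List.map_id (x :: w')]
          refine List.map_congr_left fun d hd => ?_
          rw [hz d hd]; rfl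
        rw [show (x :: w').map (Equiv.swap 1 2)
            = Equiv.swap 1 2 x :: w'.map (Equiv.swap 1 2) from rfl] at hmap ⊢
        rw [hmap]
        rw [bTail, if_pos hP, bTail, if_pos hP]
        exact caseOneVal_zero_swap _ hz j
      · -- in {0,1}, some 1
        have hP' : ¬ ∀ d ∈ (x :: w').map (Equiv.swap 1 2), d = 0 ∨ d = 1 := by
          rw [mem_map_swap_01]; exact hQ
        have hQ' : ∀ d ∈ (x :: w').map (Equiv.swap 1 2), d = 0 ∨ d = 2 := by
          rw [mem_map_swap_02]; exact hP
        rw [show (x :: w').map (Equiv.swap 1 2)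
            = Equiv.swap 1 2 x :: w'.map (Equiv.swap 1 2) from rfl] at hP' hQ' ⊢
        rw [bTail, if_neg hP', if_pos hQ', bTail, if_pos hP]
        rw [show (Equiv.swap 1 2 x :: List.map (⇑(Equiv.swap 1 2)) w')
            = (x :: w').map (Equiv.swap 1 2) from rfl, map_swap_swap,
          Equiv.swap_apply_self]
    · by_cases hQ : ∀ d ∈ x :: w', d = 0 ∨ d = 2
      · -- in {0,2}, some 2
        have hP' : ∀ d ∈ (x :: w').map (Equiv.swap 1 2), d = 0 ∨ d = 1 := by
          rw [mem_map_swap_01]; exact hQ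
        rw [show (x :: w').map (Equiv.swap 1 2)
            = Equiv.swap 1 2 x :: w'.map (Equiv.swap 1 2) from rfl] at hP' ⊢
        rw [bTail, if_pos hP', bTail, if_neg hP, if_pos hQ]
        rfl
      · -- recursive case
        have hP' : ¬ ∀ d ∈ (x :: w').map (Equiv.swap 1 2), d = 0 ∨ d = 1 := by
          rw [mem_map_swap_01]; exact hQ
        have hQ' : ¬ ∀ d ∈ (x :: w').map (Equiv.swap 1 2), d = 0 ∨ d = 2 := by
          rw [mem_map_swap_02]; exact hP
        rw [show (x :: w').map (Equiv.swap 1 2)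
            = Equiv.swap 1 2 x :: w'.map (Equiv.swap 1 2) from rfl] at hP' hQ' ⊢
        rw [bTail, if_neg hP', if_neg hQ', bTail, if_neg hP, if_neg hQ]
        exact ih j

/-- The 'local symmetry' used in the proof of Theorem 2.4: with `τ` the transposition
swapping `1` and `2` (and fixing `0`), for every word `w` of length `m ≥ 1` beginning
with the letter `0` and every `j`, one has `b(τ ∘ w, τ j) = b(w, j)`. -/
theorem bVal_swap_one_two (m : ℕ) (hm : 1 ≤ m) (w : List (Fin 3)) (hw : w.length = m)
    (h0 : w.head? = some 0) (j : Fin 3) :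
    bVal (w.map (Equiv.swap 1 2)) (Equiv.swap 1 2 j) = bVal w j := by
  cases w with
  | nil => simp at h0
  | cons x wt =>
    have hx : x = 0 := by simpa using h0
    subst hx
    rw [show (((0 : Fin 3) :: wt).map (Equiv.swap 1 2))
        = Equiv.swap 1 2 0 :: wt.map (Equiv.swap 1 2) from rfl, swap_val0]
    show bVal (0 :: wt.map (Equiv.swap 1 2)) (Equiv.swap 1 2 j) = bVal (0 :: wt) j
    rw [bVal, bVal, if_pos rfl, if_pos rfl]
    exact bTail_swap wt j
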